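/- arXiv:1907.05697 — 2 statements merged into one kernel-verified Lean document; each statement's English description precedes it below -/
import Mathlib

section
/- Under the hypotheses of the preceding approximation result, if additionally s* = λs for some λ > 0 and some s ∈ M₀, then there exists a_{s*} ∈ A with |R^M(s*) − ⟨s*, a_{s*}⟩| ≤ min over all λ > 0 with s*/λ ∈ M₀ of (|λ−1|/λ)·(100‖s*‖_∞ + εK‖s*‖₂). -/
noncomputable def Theta {n : ℕ} (s₁ s₂ : EuclideanSpace ℝ (Fin n)) : ℝ :=
  Real.arccos ((inner ℝ s₁ s₂ : ℝ) / (‖s₁‖ * ‖s₂‖)) / Real.pi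

noncomputable def dE {n : ℕ} (ε : ℝ) (s₁ s₂ : EuclideanSpace ℝ (Fin n)) : ℝ :=
  Theta s₁ s₂ + ε * ‖s₁ - s₂‖

lemma Theta_comm {n : ℕ} (a b : EuclideanSpace ℝ (Fin n)) : Theta a b = Theta b a := by
  unfold Theta; rw [real_inner_comm, mul_comm]

lemma Theta_smul_left {n : ℕ} {μ : ℝ} (hμ : 0 < μ) (s t : EuclideanSpace ℝ (Fin n)) :
    Theta (μ • s) t = Theta s t := by
  unfold Theta
  rw [real_inner_smul_left, norm_smul, Real.norm_eq_abs, abs_of_pos hμ, mul_assoc,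
    mul_div_mul_left _ _ (ne_of_gt hμ)]

lemma Theta_self {n : ℕ} (s : EuclideanSpace ℝ (Fin n)) (hs : s ≠ 0) : Theta s s = 0 := by
  unfold Theta
  rw [real_inner_self_eq_norm_mul_norm,
    div_self (mul_ne_zero (norm_ne_zero_iff.mpr hs) (norm_ne_zero_iff.mpr hs)),
    Real.arccos_one, zero_div]

lemma inner_abs_le_pi_norm {n : ℕ} (v a : EuclideanSpace ℝ (Fin n)) (ha : ∀ i, 0 ≤ a i) :
    |(inner ℝ v a : ℝ)| ≤ ‖(WithLp.equiv 2 (Fin n → ℝ)) v‖ * ∑ i, a i := by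
  have h : (inner ℝ v a : ℝ) = ∑ i, v i * a i := by
    simp [PiLp.inner_apply, mul_comm]
  rw [h]
  calc |∑ i, v i * a i| ≤ ∑ i, |v i * a i| := Finset.abs_sum_le_sum_abs _ _
    _ ≤ ∑ i, ‖(WithLp.equiv 2 (Fin n → ℝ)) v‖ * a i := by
        apply Finset.sum_le_sum
        intro i _
        rw [abs_mul, abs_of_nonneg (ha i)]
        refine mul_le_mul_of_nonneg_right ?_ (ha i)
        exact (Real.norm_eq_abs (v i)) ▸ norm_le_pi_norm ((WithLp.equiv 2 (Fin n → ℝ)) v) i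
    _ = _ := by rw [← Finset.mul_sum]

theorem mcshane_duality_bound_scaled {n : ℕ} (ε : ℝ) (hε : 0 < ε)
    (M₀ A : Set (EuclideanSpace ℝ (Fin n)))
    (hcomp : IsCompact M₀) (hne : M₀.Nonempty) (h0 : ∀ s ∈ M₀, s ≠ 0)
    (hA : ∀ a ∈ A, (∀ i, 0 ≤ a i) ∧ ∑ i, a i = 100)
    (R : EuclideanSpace ℝ (Fin n) → ℝ) (K : ℝ) (hK : 0 ≤ K)
    (hLip : ∀ s ∈ M₀, ∀ t ∈ M₀, |R s - R t| ≤ K * dE ε s t)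
    (hRep : ∀ s ∈ M₀, ∃ a ∈ A, R s = (inner ℝ s a : ℝ))
    (sstar : EuclideanSpace ℝ (Fin n)) (hs : sstar ≠ 0)
    (hscaled : ∃ lam : ℝ, 0 < lam ∧ lam⁻¹ • sstar ∈ M₀) :
    ∃ astar ∈ A, ∀ lam : ℝ, 0 < lam → lam⁻¹ • sstar ∈ M₀ →
      |sSup ((fun t => R t - K * dE ε sstar t) '' M₀) - (inner ℝ sstar astar : ℝ)| ≤
        (|lam - 1| / lam) *
          (100 * ‖(WithLp.equiv 2 (Fin n → ℝ)) sstar‖ + ε * K * ‖sstar‖) := by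
  obtain ⟨lam₀, hlam₀, hmem₀⟩ := hscaled
  -- the compact set of admissible scalings μ = λ⁻¹
  set S : Set ℝ := {μ | μ • sstar ∈ M₀ ∧ 0 ≤ μ} with hSdef
  have hSclosed : IsClosed S := by
    have h1 : IsClosed ((fun μ : ℝ => μ • sstar) ⁻¹' M₀) :=
      hcomp.isClosed.preimage (continuous_id.smul continuous_const)
    exact h1.inter isClosed_Ici
  have hScomp : IsCompact S := by
    obtain ⟨C, hC⟩ := hcomp.isBounded.subset_closedBall 0
    refine (isCompact_Icc (a := (0:ℝ)) (b := C / ‖sstar‖)).of_isClosed_subset hSclosed ?_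
    rintro μ ⟨hμM, hμ0⟩
    refine ⟨hμ0, ?_⟩
    have := hC hμM
    rw [Metric.mem_closedBall, dist_zero_right, norm_smul, Real.norm_eq_abs,
      abs_of_nonneg hμ0] at this
    rw [le_div_iff₀ (norm_pos_iff.mpr hs)]
    exact this
  have hSne : S.Nonempty := ⟨lam₀⁻¹, hmem₀, le_of_lt (inv_pos.mpr hlam₀)⟩
  obtain ⟨μs, hμsS, hmin⟩ := hScomp.exists_isMinOn hSne
    ((continuous_const.sub continuous_id).abs.continuousOn
      (f := fun μ : ℝ => |1 - μ|))
  have hμspos : 0 < μs := by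
    rcases lt_or_eq_of_le hμsS.2 with h | h
    · exact h
    · exfalso; apply h0 _ hμsS.1
      rw [← h, zero_smul]
  -- the representing vector at s₁ = μs • sstar
  have hs₁mem : μs • sstar ∈ M₀ := hμsS.1
  obtain ⟨a, haA, hRa⟩ := hRep _ hs₁mem
  obtain ⟨hapos, hasum⟩ := hA a haA
  refine ⟨a, haA, ?_⟩
  intro lam hlam hmemlam
  set s₁ : EuclideanSpace ℝ (Fin n) := μs • sstar with hs₁def
  -- abbreviations
  set Cst : ℝ := 100 * ‖(WithLp.equiv 2 (Fin n → ℝ)) sstar‖ + ε * K * ‖sstar‖ with hCst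
  have hCstnn : 0 ≤ Cst := by positivity
  -- step A : (|lam-1|/lam) ≥ |1 - μs|
  have hA1 : |1 - μs| ≤ |lam - 1| / lam := by
    have hlamS : lam⁻¹ ∈ S := ⟨hmemlam, le_of_lt (inv_pos.mpr hlam)⟩
    have h2 : |1 - μs| ≤ |1 - lam⁻¹| := hmin hlamS
    have h3 : |1 - lam⁻¹| = |lam - 1| / lam := by
      rw [show (1:ℝ) - lam⁻¹ = (lam - 1) / lam by field_simp, abs_div,
        abs_of_pos hlam]
    linarith [h2, h3.symm.le]
  -- step B : main estimate at μs
  -- Theta facts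
  have hTheta0 : Theta sstar s₁ = 0 := by
    rw [Theta_comm, hs₁def, Theta_smul_left hμspos, Theta_self _ hs]
  have hdEs₁ : dE ε sstar s₁ = ε * ‖sstar - s₁‖ := by
    rw [dE, hTheta0, zero_add]
  -- norms of s₁ - sstar
  have hdiff : s₁ - sstar = (μs - 1) • sstar := by
    rw [hs₁def, sub_smul, one_smul]
  have hnorm2 : ‖s₁ - sstar‖ = |1 - μs| * ‖sstar‖ := by
    rw [hdiff, norm_smul, Real.norm_eq_abs, abs_sub_comm]
  have hnormInf : ‖(WithLp.equiv 2 (Fin n → ℝ)) (s₁ - sstar)‖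
      = |1 - μs| * ‖(WithLp.equiv 2 (Fin n → ℝ)) sstar‖ := by
    have : (WithLp.equiv 2 (Fin n → ℝ)) (s₁ - sstar)
        = (μs - 1) • (WithLp.equiv 2 (Fin n → ℝ)) sstar := by
      rw [hdiff]; rfl
    rw [this, norm_smul, Real.norm_eq_abs, abs_sub_comm]
  -- upper bound on elements of the image set
  have hub : ∀ t ∈ M₀, R t - K * dE ε sstar t ≤ R s₁ + K * (ε * ‖s₁ - sstar‖) := by
    intro t ht
    have h1 : |R t - R s₁| ≤ K * dE ε t s₁ := hLip t ht _ hs₁mem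
    have h2 : dE ε t s₁ ≤ dE ε sstar t + ε * ‖s₁ - sstar‖ := by
      have hth : Theta t s₁ = Theta sstar t := by
        rw [Theta_comm, hs₁def, Theta_smul_left hμspos]
      have htri : ‖t - s₁‖ ≤ ‖sstar - t‖ + ‖s₁ - sstar‖ := by
        calc ‖t - s₁‖ = ‖(t - sstar) + (sstar - s₁)‖ := by rw [sub_add_sub_cancel]
          _ ≤ ‖t - sstar‖ + ‖sstar - s₁‖ := norm_add_le _ _
          _ = ‖sstar - t‖ + ‖s₁ - sstar‖ := by
              rw [norm_sub_rev t sstar, norm_sub_rev sstar s₁]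
      unfold dE
      rw [hth]
      nlinarith [htri, hε.le]
    have h3 : R t ≤ R s₁ + K * dE ε t s₁ := by
      have := abs_le.mp h1
      linarith [this.1, this.2]
    nlinarith [mul_le_mul_of_nonneg_left h2 hK]
  have hTne : ((fun t => R t - K * dE ε sstar t) '' M₀).Nonempty := hne.image _
  have hTbdd : BddAbove ((fun t => R t - K * dE ε sstar t) '' M₀) := by
    refine ⟨R s₁ + K * (ε * ‖s₁ - sstar‖), ?_⟩
    rintro x ⟨t, ht, rfl⟩
    exact hub t ht
  have hsupub : sSup ((fun t => R t - K * dE ε sstar t) '' M₀)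
      ≤ R s₁ + K * (ε * ‖s₁ - sstar‖) := by
    refine csSup_le hTne ?_
    rintro x ⟨t, ht, rfl⟩
    exact hub t ht
  have hsuplb : R s₁ - K * (ε * ‖s₁ - sstar‖)
      ≤ sSup ((fun t => R t - K * dE ε sstar t) '' M₀) := by
    have hmem' : R s₁ - K * dE ε sstar s₁ ∈ (fun t => R t - K * dE ε sstar t) '' M₀ :=
      ⟨s₁, hs₁mem, rfl⟩
    have := le_csSup hTbdd hmem'
    rw [hdEs₁, norm_sub_rev] at this
    exact this
  -- inner product estimate
  have hinner : |R s₁ - (inner ℝ sstar a : ℝ)|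
      ≤ |1 - μs| * (100 * ‖(WithLp.equiv 2 (Fin n → ℝ)) sstar‖) := by
    have h1 : R s₁ - (inner ℝ sstar a : ℝ) = (inner ℝ (s₁ - sstar) a : ℝ) := by
      rw [hRa, inner_sub_left]
    rw [h1]
    calc |(inner ℝ (s₁ - sstar) a : ℝ)|
        ≤ ‖(WithLp.equiv 2 (Fin n → ℝ)) (s₁ - sstar)‖ * ∑ i, a i :=
          inner_abs_le_pi_norm _ _ hapos
      _ = |1 - μs| * (100 * ‖(WithLp.equiv 2 (Fin n → ℝ)) sstar‖) := by
          rw [hnormInf, hasum]; ring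
  -- combine
  have hmain : |sSup ((fun t => R t - K * dE ε sstar t) '' M₀) - (inner ℝ sstar a : ℝ)|
      ≤ |1 - μs| * Cst := by
    have h1 : |sSup ((fun t => R t - K * dE ε sstar t) '' M₀) - R s₁|
        ≤ K * (ε * ‖s₁ - sstar‖) := by
      rw [abs_le]; constructor <;> linarith
    have h2 := abs_sub_abs_le_abs_sub (sSup ((fun t => R t - K * dE ε sstar t) '' M₀)) (R s₁)
    calc |sSup ((fun t => R t - K * dE ε sstar t) '' M₀) - (inner ℝ sstar a : ℝ)|
        ≤ |sSup ((fun t => R t - K * dE ε sstar t) '' M₀) - R s₁|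
            + |R s₁ - (inner ℝ sstar a : ℝ)| := abs_sub_le _ _ _
      _ ≤ K * (ε * ‖s₁ - sstar‖)
            + |1 - μs| * (100 * ‖(WithLp.equiv 2 (Fin n → ℝ)) sstar‖) := by
          linarith
      _ = |1 - μs| * Cst := by rw [hnorm2, hCst]; ring
  calc |sSup ((fun t => R t - K * dE ε sstar t) '' M₀) - (inner ℝ sstar a : ℝ)|
      ≤ |1 - μs| * Cst := hmain
    _ ≤ (|lam - 1| / lam) * Cst := mul_le_mul_of_nonneg_right hA1 hCstnn
end

section
/- Lower bound for representation error: let M₀ ⊆ ℝⁿ \ {0} be compact, ε > 0, R : M₀ → ℝ K-Lipschitz w.r.t. d_ε = Θ + εE, and R^M its McShane extension. If s* ∈ M \ M₀ and a ∈ ℝⁿ satisfy ⟨s*, a⟩ ≥ R(s) for all s ∈ M₀, then |⟨s*, a⟩ − R^M(s*)| ≥ K·( Θ(s*, M₀) + ε·E(s*, M₀) ), where Θ(s*,M₀) = inf_{s∈M₀} Θ(s*,s) and E(s*,M₀) = inf_{s∈M₀} ‖s*−s‖₂. -/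
theorem mcshane_lower_bound {n : ℕ} (ε : ℝ) (hε : 0 < ε)
    (M₀ : Set (EuclideanSpace ℝ (Fin n)))
    (hcomp : IsCompact M₀) (hne : M₀.Nonempty) (h0 : ∀ s ∈ M₀, s ≠ 0)
    (R : EuclideanSpace ℝ (Fin n) → ℝ) (K : ℝ) (hK : 0 ≤ K)
    (hLip : ∀ s ∈ M₀, ∀ t ∈ M₀, |R s - R t| ≤ K * dE ε s t)
    (sstar : EuclideanSpace ℝ (Fin n)) (hs : sstar ≠ 0) (hs' : sstar ∉ M₀)
    (a : EuclideanSpace ℝ (Fin n))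
    (ha : ∀ s ∈ M₀, R s ≤ (inner ℝ sstar a : ℝ)) :
    K * (sInf ((fun s => Theta sstar s) '' M₀) +
        ε * sInf ((fun s => ‖sstar - s‖) '' M₀)) ≤
      |(inner ℝ sstar a : ℝ) - sSup ((fun t => R t - K * dE ε sstar t) '' M₀)| := by
  set A := sInf ((fun s => Theta sstar s) '' M₀) with hA
  set B := sInf ((fun s => ‖sstar - s‖) '' M₀) with hB
  have hTheta_nonneg : ∀ t : EuclideanSpace ℝ (Fin n), 0 ≤ Theta sstar t := by
    intro t
    exact div_nonneg (Real.arccos_nonneg _) Real.pi_pos.le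
  have hA0 : 0 ≤ A := by
    apply Real.sInf_nonneg
    rintro x ⟨t, _, rfl⟩
    exact hTheta_nonneg t
  have hB0 : 0 ≤ B := by
    apply Real.sInf_nonneg
    rintro x ⟨t, _, rfl⟩
    exact norm_nonneg _
  have hbddA : BddBelow ((fun s => Theta sstar s) '' M₀) :=
    ⟨0, by rintro x ⟨t, _, rfl⟩; exact hTheta_nonneg t⟩
  have hbddB : BddBelow ((fun s => ‖sstar - s‖) '' M₀) :=
    ⟨0, by rintro x ⟨t, _, rfl⟩; exact norm_nonneg _⟩
  have hK0 : 0 ≤ K * (A + ε * B) := by positivity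
  have hsup : sSup ((fun t => R t - K * dE ε sstar t) '' M₀) ≤
      (inner ℝ sstar a : ℝ) - K * (A + ε * B) := by
    apply csSup_le (hne.image _)
    rintro x ⟨t, ht, rfl⟩
    dsimp only
    have h1 : A ≤ Theta sstar t := csInf_le hbddA ⟨t, ht, rfl⟩
    have h2 : B ≤ ‖sstar - t‖ := csInf_le hbddB ⟨t, ht, rfl⟩
    have h3 : K * (A + ε * B) ≤ K * dE ε sstar t := by
      apply mul_le_mul_of_nonneg_left _ hK
      unfold dE
      nlinarith
    have := ha t ht
    linarith
  have hle : K * (A + ε * B) ≤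
      (inner ℝ sstar a : ℝ) - sSup ((fun t => R t - K * dE ε sstar t) '' M₀) := by
    linarith
  exact hle.trans (le_abs_self _)
end
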